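/- Let p : X̃ → X be a covering map of path-connected spaces corresponding to a subgroup H ≤ π₁(X, x₀), and let V₀ ⊆ X be a path-connected subspace containing x₀ whose inclusion induces an isomorphism π₁(V₀, x₀) ≅ H. Then the inclusion V₀ ↪ X lifts to an embedding of V₀ into X̃, i.e., there is a lift whose restriction to V₀ maps V₀ homeomorphically onto a component of p⁻¹(V₀). -/

import Mathlib

open CategoryTheory
open scoped FundamentalGroupoid

/-- The homomorphism `f_* : π₁(X, x) → π₁(Y, f x)` on fundamental groups induced by a
continuous map `f : X → Y`. -/
noncomputable def fundamentalGroupMap {X Y : Type} [TopologicalSpace X] [TopologicalSpace Y]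
    (f : C(X, Y)) (x : X) :
    Aut (FundamentalGroupoid.mk x) →* Aut (FundamentalGroupoid.mk (f x)) :=
  Functor.mapAut (FundamentalGroupoid.mk x) ((FundamentalGroupoid.fundamentalGroupoidFunctor.map (X := TopCat.of X) (Y := TopCat.of Y) (TopCat.ofHom f) :
      Grpd.of (FundamentalGroupoid X) ⟶ Grpd.of (FundamentalGroupoid Y)) :
      FundamentalGroupoid X ⥤ FundamentalGroupoid Y)

open scoped unitInterval
open Set Filter Topology

variable {E X : Type*} [TopologicalSpace E] [TopologicalSpace X] {p : E → X}

/-- Extension step: extend a partial lift over an evenly covered piece. -/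
theorem lift_ext_step {F : Type*} [TopologicalSpace F] (T : Bundle.Trivialization F p)
    {γ : ℝ → X} (hγ : Continuous γ) {t₁ t₂ : ℝ} (h12 : t₁ ≤ t₂)
    (hU : ∀ s ∈ Set.Icc t₁ t₂, γ s ∈ T.baseSet)
    {Γ : ℝ → E} (hΓc : Continuous Γ) (hΓ : ∀ s ∈ Set.Icc (0:ℝ) t₁, p (Γ s) = γ s)
    (h01 : (0:ℝ) ≤ t₁) :
    ∃ Γ' : ℝ → E, Continuous Γ' ∧ (∀ s ∈ Set.Icc (0:ℝ) t₂, p (Γ' s) = γ s) ∧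
      ∀ s ≤ t₁, Γ' s = Γ s := by
  set c : F := (T (Γ t₁)).2 with hc
  have ht₁U : γ t₁ ∈ T.baseSet := hU t₁ ⟨le_refl _, h12⟩
  have hpΓ : p (Γ t₁) = γ t₁ := hΓ t₁ ⟨h01, le_rfl⟩
  have hpU : p (Γ t₁) ∈ T.baseSet := by rw [hpΓ]; exact ht₁U
  have hsrc : Γ t₁ ∈ T.source := T.mem_source.2 hpU
  have hτmem : ∀ s, max t₁ (min s t₂) ∈ Set.Icc t₁ t₂ := fun s =>
    ⟨le_max_left _ _, max_le h12 (min_le_right _ _)⟩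
  have hbranch : Continuous fun s => T.toOpenPartialHomeomorph.symm (γ (max t₁ (min s t₂)), c) := by
    apply T.toOpenPartialHomeomorph.continuousOn_symm.comp_continuous
      ((hγ.comp (continuous_const.max (continuous_id.min continuous_const))).prodMk
        continuous_const)
    intro s
    exact T.mem_target.2 (hU _ (hτmem s))
  have hagree : T.toOpenPartialHomeomorph.symm (γ t₁, c) = Γ t₁ := by
    have h1 : (γ t₁, c) = T (Γ t₁) := by rw [← hpΓ]; exact T.mk_proj_snd' hpU
    rw [h1]
    exact T.toOpenPartialHomeomorph.left_inv hsrc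
  refine ⟨fun s => if s ≤ t₁ then Γ s else T.toOpenPartialHomeomorph.symm (γ (max t₁ (min s t₂)), c),
    ?_, ?_, ?_⟩
  · refine Continuous.if_le hΓc hbranch continuous_id continuous_const ?_
    intro s hs
    subst hs
    rw [min_eq_left h12, max_self, hagree]
  · intro s hs
    by_cases h : s ≤ t₁
    · simp only [if_pos h]; exact hΓ s ⟨hs.1, h⟩
    · simp only [if_neg h]
      push_neg at h
      rw [min_eq_left hs.2, max_eq_right h.le]
      exact T.proj_symm_apply (T.mem_target.2 (hU s ⟨h.le, hs.2⟩))
  · intro s hs; simp only [if_pos hs]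

theorem IsCoveringMap.nonempty_fiber_of_continuous (hp : IsCoveringMap p) {Y : Type*}
    [TopologicalSpace Y] [PreconnectedSpace Y] (f : Y → X) (hf : Continuous f) (y₀ : Y)
    (e : E) (he : p e = f y₀) (y : Y) : Nonempty (p ⁻¹' {f y}) := by
  have hcl : IsClopen (Set.range p) := by
    refine ⟨isOpen_compl_iff.1 (isOpen_iff_forall_mem_open.2 fun x hx => ?_),
      hp.isOpenMap.isOpen_range⟩
    obtain ⟨_, U, hxU, hU, _, H, _⟩ := hp x
    refine ⟨U, fun u hu ⟨e', he'⟩ => ?_, hU, hxU⟩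
    have hmem : e' ∈ p ⁻¹' U := by show p e' ∈ U; rw [he']; exact hu
    exact hx ⟨_, (H ⟨e', hmem⟩).2.2⟩
  have huniv := (hcl.preimage hf).eq_univ ⟨y₀, ⟨e, he⟩⟩
  have hy : y ∈ f ⁻¹' Set.range p := by rw [huniv]; trivial
  obtain ⟨e', he'⟩ := hy
  exact ⟨⟨e', he'⟩⟩

/-- Path lifting for covering maps. -/
theorem IsCoveringMap.exists_path_lift (hp : IsCoveringMap p) (γ : C(I, X)) (e₀ : E)
    (he : p e₀ = γ 0) : ∃ Γ : C(I, E), (∀ t, p (Γ t) = γ t) ∧ Γ 0 = e₀ := by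
  set γ' : ℝ → X := fun s => γ (Set.projIcc 0 1 zero_le_one s) with hγ'def
  have hγ'c : Continuous γ' := γ.continuous.comp continuous_projIcc
  haveI hne : ∀ s, Nonempty (p ⁻¹' {γ' s}) := fun s =>
    hp.nonempty_fiber_of_continuous γ' hγ'c 0 e₀ (by simp only [hγ'def]; rw [Set.projIcc_left]; exact he) s
  set A : Set ℝ := {t | ∃ Γ : ℝ → E, Continuous Γ ∧ Γ 0 = e₀ ∧
      ∀ s ∈ Set.Icc (0:ℝ) t, p (Γ s) = γ' s} with hA
  have hdown : ∀ t ∈ A, ∀ t' ≤ t, t' ∈ A := by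
    rintro t ⟨Γ, hc, h0, hl⟩ t' ht'
    exact ⟨Γ, hc, h0, fun s hs => hl s ⟨hs.1, hs.2.trans ht'⟩⟩
  have h0A : (0 : ℝ) ∈ A := by
    refine ⟨fun _ => e₀, continuous_const, rfl, fun s hs => ?_⟩
    have hs0 : s = 0 := le_antisymm hs.2 hs.1
    subst hs0
    simp only [hγ'def]
    rw [Set.projIcc_left]
    exact he
  have hneg : ∀ t ≤ (0:ℝ), t ∈ A := fun t ht => hdown 0 h0A t ht
  -- key step
  have hstep : ∀ t₀ ∈ A, 0 ≤ t₀ → ∀ t, t₀ ≤ t → ∀ x : X, ∀ [Nonempty (p ⁻¹' {x})],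
      (∀ s ∈ Set.Icc t₀ t, γ' s ∈ ((hp x).toTrivialization).baseSet) → t ∈ A := by
    rintro t₀ ⟨Γ, hc, h0, hl⟩ h0t₀ t ht x hxne hU
    obtain ⟨Γ', hc', hl', hext⟩ :=
      lift_ext_step ((hp x).toTrivialization) hγ'c ht hU hc hl h0t₀
    exact ⟨Γ', hc', by rw [hext 0 h0t₀]; exact h0, hl'⟩
  -- A is clopen
  have hopen : IsOpen A := by
    rw [Metric.isOpen_iff]
    intro t htA
    rcases le_or_gt t 0 with ht0 | ht0
    · rcases lt_or_ge t 0 with ht0' | ht0'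
      · exact ⟨-t, by linarith, fun s hs => hneg s (by
          rw [Metric.mem_ball, Real.dist_eq] at hs
          rcases abs_lt.1 hs with ⟨h1, h2⟩
          linarith)⟩
      · have ht00 : t = 0 := le_antisymm ht0 ht0'
        subst ht00
        -- use step from 0
        have hUopen : IsOpen (γ' ⁻¹' ((hp (γ' 0)).toTrivialization.baseSet)) :=
          ((hp (γ' 0)).toTrivialization.open_baseSet).preimage hγ'c
        have hmem : (0:ℝ) ∈ γ' ⁻¹' ((hp (γ' 0)).toTrivialization.baseSet) :=
          (hp (γ' 0)).mem_toTrivialization_baseSet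
        obtain ⟨δ, hδ, hball⟩ := Metric.isOpen_iff.1 hUopen 0 hmem
        refine ⟨δ, hδ, fun s hs => ?_⟩
        rcases le_or_gt s 0 with h | h
        · exact hneg s h
        · refine hstep 0 h0A le_rfl s h.le (γ' 0) fun r hr => hball ?_
          rw [Metric.mem_ball, Real.dist_eq, sub_zero, abs_of_nonneg hr.1]
          rw [Metric.mem_ball, Real.dist_eq] at hs
          have := abs_lt.1 hs
          linarith [hr.2, this.1, this.2]
    · have hUopen : IsOpen (γ' ⁻¹' ((hp (γ' t)).toTrivialization.baseSet)) :=
        ((hp (γ' t)).toTrivialization.open_baseSet).preimage hγ'c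
      have hmem : t ∈ γ' ⁻¹' ((hp (γ' t)).toTrivialization.baseSet) :=
        (hp (γ' t)).mem_toTrivialization_baseSet
      obtain ⟨δ, hδ, hball⟩ := Metric.isOpen_iff.1 hUopen t hmem
      refine ⟨δ, hδ, fun s hs => ?_⟩
      rcases le_or_gt s t with h | h
      · exact hdown t htA s h
      · refine hstep t htA ht0.le s h.le (γ' t) fun r hr => hball ?_
        rw [Metric.mem_ball, Real.dist_eq] at hs ⊢
        rw [abs_of_nonneg (by linarith [hr.1])]
        have := abs_lt.1 hs
        linarith [hr.2, this.1, this.2]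
  have hclosed : IsClosed A := by
    rw [← closure_eq_iff_isClosed]
    refine Subset.antisymm (fun t ht => ?_) subset_closure
    rcases le_or_gt t 0 with ht0 | ht0
    · exact hneg t ht0
    · have hUopen : IsOpen (γ' ⁻¹' ((hp (γ' t)).toTrivialization.baseSet)) :=
        ((hp (γ' t)).toTrivialization.open_baseSet).preimage hγ'c
      have hmem : t ∈ γ' ⁻¹' ((hp (γ' t)).toTrivialization.baseSet) :=
        (hp (γ' t)).mem_toTrivialization_baseSet
      obtain ⟨δ, hδ, hball⟩ := Metric.isOpen_iff.1 hUopen t hmem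
      obtain ⟨t₀, ht₀A, ht₀d⟩ := Metric.mem_closure_iff.1 ht (min δ t) (lt_min hδ ht0)
      rcases le_or_gt t t₀ with h | h
      · exact hdown t₀ ht₀A t h
      · -- t₀ < t, t₀ ∈ A, t₀ > 0
        rw [Real.dist_eq] at ht₀d
        have habs := abs_lt.1 ht₀d
        have ht₀pos : 0 < t₀ := by
          have := min_le_right δ t
          linarith [habs.1, habs.2]
        refine hstep t₀ ht₀A ht₀pos.le t h.le (γ' t) fun r hr => hball ?_
        rw [Metric.mem_ball, Real.dist_eq]
        rw [show r - t = -(t - r) by ring, abs_neg, abs_of_nonneg (by linarith [hr.2])]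
        have h3 : t - t₀ < δ := lt_of_lt_of_le habs.2 (min_le_left _ _)
        linarith [hr.1]
  -- conclude
  have hA1 : (1:ℝ) ∈ A := by
    have : A = Set.univ := IsClopen.eq_univ ⟨hclosed, hopen⟩ ⟨0, h0A⟩
    rw [this]; trivial
  obtain ⟨Γ, hΓc, hΓ0, hΓl⟩ := hA1
  refine ⟨⟨fun t => Γ t.1, hΓc.comp continuous_subtype_val⟩, fun t => ?_, ?_⟩
  · have := hΓl t.1 ⟨t.2.1, t.2.2⟩
    simp only [ContinuousMap.coe_mk]
    rw [this]
    simp only [hγ'def]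
    congr 1
    exact Set.projIcc_val zero_le_one t
  · show Γ ((0:I):ℝ) = e₀
    rw [Set.Icc.coe_zero, hΓ0]

lemma I_coe_min (a b : I) : ((min a b : I) : ℝ) = min (a:ℝ) (b:ℝ) := by
  rcases le_total a b with h | h
  · rw [min_eq_left h, min_eq_left (Subtype.coe_le_coe.2 h)]
  · rw [min_eq_right h, min_eq_right (Subtype.coe_le_coe.2 h)]

/-- The homotopy lifting property for covering maps. -/
theorem IsCoveringMap.exists_homotopy_lift (hp : IsCoveringMap p) {Y : Type*}
    [TopologicalSpace Y] (H : C(Y × I, X)) (h₀ : Y → E) (h₀c : Continuous h₀)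
    (hh : ∀ y, p (h₀ y) = H (y, 0)) :
    ∃ L : Y × I → E, Continuous L ∧ (∀ z, p (L z) = H z) ∧ ∀ y, L (y, 0) = h₀ y := by
  have hvertc : ∀ y : Y, Continuous fun t : I => H (y, t) :=
    fun y => H.continuous.comp (continuous_const.prodMk continuous_id)
  have hex : ∀ y : Y, ∃ Γ : C(I, E), (∀ t, p (Γ t) = H (y, t)) ∧ Γ 0 = h₀ y :=
    fun y => hp.exists_path_lift ⟨fun t => H (y, t), hvertc y⟩ (h₀ y) (hh y)
  set L : Y × I → E := fun z => (hex z.1).choose z.2 with hLdef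
  have hLp : ∀ z, p (L z) = H z := fun z => (hex z.1).choose_spec.1 z.2
  have hL0 : ∀ y, L (y, 0) = h₀ y := fun y => (hex y).choose_spec.2
  refine ⟨L, ?_, hLp, hL0⟩
  -- continuity is local in Y
  suffices hloc : ∀ y₀ : Y, ∃ N : Set Y, IsOpen N ∧ y₀ ∈ N ∧
      ContinuousOn L (N ×ˢ (Set.univ : Set I)) by
    rw [continuous_iff_continuousAt]
    rintro ⟨y, t⟩
    obtain ⟨N, hNopen, hyN, hNcont⟩ := hloc y
    exact hNcont.continuousAt ((hNopen.prod isOpen_univ).mem_nhds ⟨hyN, trivial⟩)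
  intro y₀
  haveI hne : ∀ s : I, Nonempty (p ⁻¹' {H (y₀, s)}) := fun s =>
    hp.nonempty_fiber_of_continuous (fun t : I => H (y₀, t)) (hvertc y₀) 0 (h₀ y₀) (hh y₀) s
  -- choose evenly covered neighborhoods along the fiber {y₀} × I
  have hsel : ∀ s : I, ∃ V : Set Y, ∃ W : Set I, IsOpen V ∧ IsOpen W ∧ y₀ ∈ V ∧ s ∈ W ∧
      ∀ y ∈ V, ∀ t ∈ W, H (y, t) ∈ ((hp (H (y₀, s))).toTrivialization).baseSet := by
    intro s
    have hopen : IsOpen (H ⁻¹' ((hp (H (y₀, s))).toTrivialization).baseSet) :=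
      ((hp (H (y₀, s))).toTrivialization.open_baseSet).preimage H.continuous
    have hmem : (y₀, s) ∈ H ⁻¹' ((hp (H (y₀, s))).toTrivialization).baseSet :=
      (hp (H (y₀, s))).mem_toTrivialization_baseSet
    obtain ⟨V, W, hV, hW, hyV, hsW, hVW⟩ := isOpen_prod_iff.1 hopen y₀ s hmem
    exact ⟨V, W, hV, hW, hyV, hsW, fun y hy t ht => hVW (Set.mk_mem_prod hy ht)⟩
  choose V W hVopen hWopen hy₀V hsW hVW using hsel
  -- Lebesgue number for the cover {W s} of I
  obtain ⟨δ, hδpos, hδ⟩ := lebesgue_number_lemma_of_metric isCompact_univ hWopen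
    (fun t _ => Set.mem_iUnion.2 ⟨t, hsW t⟩)
  have hτex : ∀ t : I, ∃ s : I, Metric.ball t δ ⊆ W s := fun t => hδ t trivial
  choose τ' hτ' using hτex
  obtain ⟨n, hn⟩ := exists_nat_one_div_lt hδpos
  set m : ℕ := n + 1 with hm
  have hmpos : (0:ℝ) < m := by positivity
  have hmδ : 1 / (m:ℝ) < δ := by exact_mod_cast hn
  -- the subdivision points
  have humem : ∀ i : ℕ, min ((i:ℝ)/m) 1 ∈ I :=
    fun i => ⟨le_min (by positivity) zero_le_one, min_le_right _ _⟩
  set u : ℕ → I := fun i => ⟨min ((i:ℝ)/m) 1, humem i⟩ with hudef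
  have hdivmono : ∀ i : ℕ, (i:ℝ)/m ≤ ((i+1:ℕ):ℝ)/m := by
    intro i
    have h1 : (i:ℝ) ≤ ((i+1:ℕ):ℝ) := by exact_mod_cast Nat.le_succ i
    exact div_le_div_of_nonneg_right h1 hmpos.le
  have humono : ∀ i : ℕ, u i ≤ u (i+1) := by
    intro i
    apply Subtype.coe_le_coe.1
    exact min_le_min (hdivmono i) le_rfl
  have hudiff : ∀ i : ℕ, (u (i+1) : ℝ) - u i ≤ 1 / m := by
    intro i
    simp only [hudef]
    have h1 : ((i+1:ℕ):ℝ)/m = (i:ℝ)/m + 1/m := by push_cast; ring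
    have h1m : (0:ℝ) ≤ 1/m := by positivity
    rcases le_or_gt 1 ((i:ℝ)/m) with h | h
    · rw [min_eq_right h, min_eq_right (by rw [h1]; linarith)]
      simpa using h1m
    · rw [min_eq_left h.le]
      have h3 : min (((i+1:ℕ):ℝ)/m) 1 ≤ (i:ℝ)/m + 1/m := by rw [← h1]; exact min_le_left _ _
      linarith
  set N : Set Y := ⋂ i ∈ Finset.range m, V (τ' (u i)) with hNdef
  have hNopen : IsOpen N := isOpen_biInter_finset fun i _ => hVopen _
  have hy₀N : y₀ ∈ N := Set.mem_biInter fun i _ => hy₀V _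
  refine ⟨N, hNopen, hy₀N, ?_⟩
  -- inductive construction of a continuous lift on N × I
  have key : ∀ i : ℕ, ∃ G : ↥N × I → E, Continuous G ∧
      (∀ z : ↥N × I, p (G z) = H (z.1.1, min z.2 (u i))) ∧
      (∀ y : ↥N, G (y, 0) = h₀ y.1) := by
    intro i
    induction i with
    | zero =>
      refine ⟨fun z => h₀ z.1.1, h₀c.comp (continuous_subtype_val.comp continuous_fst), ?_, ?_⟩
      · intro z
        have hu0 : u 0 = 0 := by
          apply Subtype.ext
          simp [hudef]
        show p (h₀ z.1.1) = H (z.1.1, min z.2 (u 0))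
        rw [hu0, min_eq_right unitInterval.nonneg', hh]
      · intro y; rfl
    | succ i ih =>
      obtain ⟨G, hGc, hGp, hG0⟩ := ih
      by_cases hcase : (1:ℝ) ≤ (i:ℝ)/m
      · refine ⟨G, hGc, ?_, hG0⟩
        have huu : u (i+1) = u i := by
          apply Subtype.ext
          simp only [hudef]
          rw [min_eq_right hcase, min_eq_right (le_trans hcase (hdivmono i))]
        intro z
        rw [huu]
        exact hGp z
      · push_neg at hcase
        have him : i < m := by
          by_contra hc
          push_neg at hc
          exact absurd ((le_div_iff₀ hmpos).2 (by exact_mod_cast Nat.one_mul m ▸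
            (by exact_mod_cast hc : (m:ℝ) ≤ i) )) (not_le.2 hcase)
        set T := (hp (H (y₀, τ' (u i)))).toTrivialization with hTdef
        have hbase : ∀ (y : ↥N) (t : I), u i ≤ t → t ≤ u (i+1) → H (y.1, t) ∈ T.baseSet := by
          intro y t h1 h2
          refine hVW _ _ ?_ _ ?_
          · exact Set.mem_iInter₂.1 y.2 i (Finset.mem_range.2 him)
          · apply hτ' (u i)
            rw [Metric.mem_ball, Subtype.dist_eq, Real.dist_eq,
              abs_of_nonneg (sub_nonneg.2 (Subtype.coe_le_coe.2 h1))]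
            have h3 := hudiff i
            have h4 : (t:ℝ) ≤ u (i+1) := Subtype.coe_le_coe.2 h2
            linarith
        -- the clamping map
        have hclampmem : ∀ t : I, max (u i : ℝ) (min (t:ℝ) (u (i+1) : ℝ)) ∈ I := by
          intro t
          constructor
          · exact le_trans (u i).2.1 (le_max_left _ _)
          · exact max_le (u i).2.2 (le_trans (min_le_left _ _) t.2.2)
        set clamp : I → I := fun t => ⟨max (u i : ℝ) (min (t:ℝ) (u (i+1) : ℝ)), hclampmem t⟩
          with hclampdef
        have hclampc : Continuous clamp := Continuous.subtype_mk
          (continuous_const.max ((continuous_subtype_val).min continuous_const)) _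
        have hclampbounds : ∀ t : I, u i ≤ clamp t ∧ clamp t ≤ u (i+1) := by
          intro t
          constructor
          · exact Subtype.coe_le_coe.1 (le_max_left _ _)
          · apply Subtype.coe_le_coe.1
            exact max_le (Subtype.coe_le_coe.2 (humono i)) (min_le_right _ _)
        have hGsrc : ∀ y : ↥N, G (y, u i) ∈ T.source := by
          intro y
          rw [T.mem_source, hGp (y, u i), min_self]
          exact hbase y (u i) le_rfl (humono i)
        set c : ↥N → (p ⁻¹' {H (y₀, τ' (u i))}) := fun y => (T (G (y, u i))).2 with hcdef
        have hcc : Continuous c := continuous_snd.comp <|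
          T.continuousOn_toFun.comp_continuous
            (hGc.comp (continuous_id.prodMk continuous_const)) hGsrc
        refine ⟨fun z => if (z.2 : ℝ) ≤ (u i : ℝ) then G z
          else T.toOpenPartialHomeomorph.symm (H (z.1.1, clamp z.2), c z.1), ?_, ?_, ?_⟩
        · apply Continuous.if_le hGc ?_ (continuous_subtype_val.comp continuous_snd)
            continuous_const
          · -- boundary agreement
            intro z hz
            have hz2 : z.2 = u i := Subtype.ext hz
            have hcl : clamp z.2 = u i := by
              apply Subtype.ext
              simp only [hclampdef, hz2]
              rw [min_eq_left (Subtype.coe_le_coe.2 (humono i)), max_self]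
            rw [hcl]
            have hHb : H (z.1.1, u i) ∈ T.baseSet := hbase z.1 (u i) le_rfl (humono i)
            have hproj : p (G (z.1, u i)) = H (z.1.1, u i) := by
              rw [hGp (z.1, u i), min_self]
            have hTmk : (H (z.1.1, u i), c z.1) = T (G (z.1, u i)) := by
              rw [← hproj]
              exact T.mk_proj_snd' (by rw [hproj]; exact hHb)
            rw [← hproj]
            simp only [hcdef]
            rw [T.symm_apply_mk_proj (hGsrc z.1)]
            rw [← hz2]
          · -- continuity of the second branch
            apply T.toOpenPartialHomeomorph.continuousOn_symm.comp_continuous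
            · exact (H.continuous.comp ((continuous_subtype_val.comp continuous_fst).prodMk
                (hclampc.comp continuous_snd))).prodMk (hcc.comp continuous_fst)
            · intro z
              exact T.mem_target.2 (hbase z.1 (clamp z.2) (hclampbounds z.2).1
                (hclampbounds z.2).2)
        · intro z
          dsimp only
          by_cases h : (z.2 : ℝ) ≤ (u i : ℝ)
          · rw [if_pos h]
            have h' : z.2 ≤ u i := Subtype.coe_le_coe.1 h
            rw [hGp z, min_eq_left h', min_eq_left (h'.trans (humono i))]
          · rw [if_neg h]
            push_neg at h
            have hcl : clamp z.2 = min z.2 (u (i+1)) := by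
              apply Subtype.ext
              simp only [hclampdef]
              rw [I_coe_min, max_eq_right (le_min h.le (Subtype.coe_le_coe.2 (humono i)))]
            rw [T.proj_symm_apply (T.mem_target.2 (hbase z.1 (clamp z.2) (hclampbounds z.2).1
              (hclampbounds z.2).2)), hcl]
        · intro y
          dsimp only
          have h0u : ((0:I) : ℝ) ≤ (u i : ℝ) := (u i).2.1
          rw [if_pos h0u]
          exact hG0 y
  obtain ⟨G, hGc, hGp, hG0⟩ := key m
  have hum : u m = 1 := by
    apply Subtype.ext
    simp only [hudef]
    rw [div_self (ne_of_gt hmpos), min_self]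
    rfl
  have hGp' : ∀ z : ↥N × I, p (G z) = H (z.1.1, z.2) := by
    intro z
    rw [hGp z, hum, min_eq_left unitInterval.le_one']
  -- vertical uniqueness : G agrees with L
  have hvert : ∀ (y : ↥N) (t : I), G (y, t) = L (y.1, t) := by
    intro y t
    have h1 : Continuous fun t : I => G (y, t) := hGc.comp (continuous_const.prodMk continuous_id)
    have h2 : Continuous fun t : I => L (y.1, t) := (hex y.1).choose.continuous
    have heq : (fun t : I => p (G (y, t))) = fun t : I => p (L (y.1, t)) := by
      funext t
      rw [hGp' (y, t), hLp (y.1, t)]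
    have h0 : G (y, 0) = L (y.1, 0) := by rw [hG0 y, hL0 y.1]
    have := hp.eq_of_comp_eq h1 h2 (funext fun t => congrFun heq t) 0 h0
    exact congrFun this t
  rw [continuousOn_iff_continuous_restrict]
  have hres : (N ×ˢ (Set.univ : Set I)).restrict L =
      G ∘ (fun z : ↥(N ×ˢ (Set.univ : Set I)) => ((⟨z.1.1, z.2.1⟩ : ↥N), z.1.2)) := by
    funext z
    exact (hvert ⟨z.1.1, z.2.1⟩ z.1.2).symm
  rw [show (N ×ˢ (Set.univ : Set I)).domRestrict L = _ from hres]
  exact hGc.comp (Continuous.prodMk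
    (Continuous.subtype_mk (continuous_fst.comp continuous_subtype_val) _)
    (continuous_snd.comp continuous_subtype_val))

/-- Uniqueness of path lifts. -/
theorem IsCoveringMap.lift_unique (hp : IsCoveringMap p) {g₁ g₂ : I → E}
    (c₁ : Continuous g₁) (c₂ : Continuous g₂) (hpp : ∀ t, p (g₁ t) = p (g₂ t))
    (h0 : g₁ 0 = g₂ 0) : ∀ t, g₁ t = g₂ t :=
  fun t => congrFun (hp.eq_of_comp_eq c₁ c₂ (funext hpp) 0 h0) t

/-- Monodromy: lifts of homotopic paths starting at the same point end at the same point. -/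
theorem IsCoveringMap.lift_homotopic (hp : IsCoveringMap p) {x₀ x₁ : X} {γ₀ γ₁ : Path x₀ x₁}
    (h : γ₀.Homotopic γ₁) {Γ₀ Γ₁ : I → E} (c₀ : Continuous Γ₀) (c₁ : Continuous Γ₁)
    (h₀p : ∀ t, p (Γ₀ t) = γ₀ t) (h₁p : ∀ t, p (Γ₁ t) = γ₁ t) (h00 : Γ₀ 0 = Γ₁ 0) :
    Γ₀ 1 = Γ₁ 1 := by
  obtain ⟨F⟩ := h
  set H : C(I × I, X) := ⟨fun z => F (z.2, z.1),
    F.continuous.comp (continuous_snd.prodMk continuous_fst)⟩ with hHdef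
  obtain ⟨L, hLc, hLp, hL0⟩ := hp.exists_homotopy_lift H Γ₀ c₀ (by
    intro s
    show p (Γ₀ s) = F (0, s)
    rw [F.apply_zero, h₀p s]
    rfl)
  -- the left edge is constant
  have hleft : ∀ t : I, L (0, t) = Γ₀ 0 := by
    apply hp.lift_unique (hLc.comp (continuous_const.prodMk continuous_id)) continuous_const
    · intro t
      show p (L (0, t)) = p (Γ₀ 0)
      have h1 : p (L (0, t)) = F (t, 0) := hLp (0, t)
      have h2 : F (t, (0:I)) = γ₀ 0 := F.eq_fst t (Set.mem_insert 0 {1})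
      rw [h1, h2, h₀p 0]
    · exact hL0 0
  -- the right edge is constant
  have hright : ∀ t : I, L (1, t) = Γ₀ 1 := by
    apply hp.lift_unique (hLc.comp (continuous_const.prodMk continuous_id)) continuous_const
    · intro t
      show p (L (1, t)) = p (Γ₀ 1)
      have h1 : p (L (1, t)) = F (t, 1) := hLp (1, t)
      have h2 : F (t, (1:I)) = γ₀ 1 := F.eq_fst t (Set.mem_insert_of_mem 0 rfl)
      rw [h1, h2, h₀p 1]
    · exact hL0 1
  -- the top edge is a lift of γ₁ starting at Γ₁ 0
  have htop : ∀ s : I, L (s, 1) = Γ₁ s := by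
    apply hp.lift_unique (hLc.comp (continuous_id.prodMk continuous_const)) c₁
    · intro s
      show p (L (s, 1)) = p (Γ₁ s)
      have h1 : p (L (s, 1)) = F (1, s) := hLp (s, 1)
      rw [h1, h₁p s]
      exact F.apply_one s
    · show L (0, 1) = Γ₁ 0
      rw [hleft 1, h00]
  rw [← hright 1, htop 1]

open CategoryTheory
open scoped FundamentalGroupoid

attribute [local instance] Path.Homotopic.setoid

/-- An element of the fundamental group from a loop. -/
noncomputable def pathToAut {Z : Type} [TopologicalSpace Z] {z : Z} (γ : Path z z) :
    Aut (FundamentalGroupoid.mk z) where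
  hom := ⟦γ⟧
  inv := CategoryTheory.Groupoid.inv ⟦γ⟧
  hom_inv_id := CategoryTheory.Groupoid.comp_inv _
  inv_hom_id := CategoryTheory.Groupoid.inv_comp _

theorem pathToAut_hom {Z : Type} [TopologicalSpace Z] {z : Z} (γ : Path z z) :
    (pathToAut γ).hom = ⟦γ⟧ := rfl

theorem fundamentalGroupMap_hom {Z W : Type} [TopologicalSpace Z] [TopologicalSpace W]
    (f : C(Z, W)) (z : Z) (B : Aut (FundamentalGroupoid.mk z)) (δ : Path z z) (hB : B.hom = ⟦δ⟧) :
    (fundamentalGroupMap f z B).hom = ⟦δ.map f.continuous⟧ := by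
  have h1 : (fundamentalGroupMap f z B).hom = Path.Homotopic.Quotient.map B.hom f := rfl
  rw [h1, hB]; rfl

section Key

variable {Xt X : Type} [TopologicalSpace Xt] [TopologicalSpace X]
    {p : Xt → X} {xt₀ : Xt} {V₀ : Set X}

/-- Loops in `V₀` lift to loops. -/
theorem loops_lift_closed (hp : IsCoveringMap p) (hx₀ : p xt₀ ∈ V₀)
    (himage : (fundamentalGroupMap (⟨Subtype.val, continuous_subtype_val⟩ : C(↥V₀, X))
        ⟨p xt₀, hx₀⟩).range =
      (fundamentalGroupMap ⟨p, hp.continuous⟩ xt₀).range)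
    (η : Path (⟨p xt₀, hx₀⟩ : ↥V₀) ⟨p xt₀, hx₀⟩)
    {Γ : I → Xt} (hΓc : Continuous Γ)
    (hΓp : ∀ t, p (Γ t) = (η.map continuous_subtype_val) t)
    (hΓ0 : Γ 0 = xt₀) : Γ 1 = xt₀ := by
  have hmem : fundamentalGroupMap (⟨Subtype.val, continuous_subtype_val⟩ : C(↥V₀, X))
      ⟨p xt₀, hx₀⟩ (pathToAut η) ∈ (fundamentalGroupMap ⟨p, hp.continuous⟩ xt₀).range := by
    rw [← himage]
    exact ⟨pathToAut η, rfl⟩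
  obtain ⟨b, hb⟩ := hmem
  obtain ⟨δ, hδ⟩ := Quotient.exists_rep b.hom
  have h1 : (fundamentalGroupMap (⟨p, hp.continuous⟩ : C(Xt, X)) xt₀ b).hom =
      ⟦δ.map (⟨p, hp.continuous⟩ : C(Xt, X)).continuous⟧ := fundamentalGroupMap_hom _ _ _ δ hδ.symm
  have h2 : (fundamentalGroupMap (⟨Subtype.val, continuous_subtype_val⟩ : C(↥V₀, X))
      ⟨p xt₀, hx₀⟩ (pathToAut η)).hom =
      ⟦η.map (⟨Subtype.val, continuous_subtype_val⟩ : C(↥V₀, X)).continuous⟧ :=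
    fundamentalGroupMap_hom _ _ _ η rfl
  have h3 := congrArg Iso.hom hb
  rw [h1, h2] at h3
  have h4 : (η.map (⟨Subtype.val, continuous_subtype_val⟩ : C(↥V₀, X)).continuous).Homotopic
      (δ.map (⟨p, hp.continuous⟩ : C(Xt, X)).continuous) := (Quotient.exact h3).symm
  have h5 : Γ 1 = δ 1 := by
    refine hp.lift_homotopic h4 hΓc δ.continuous (fun t => hΓp t) (fun t => rfl) ?_
    rw [hΓ0, δ.source]
  rw [h5, δ.target]

/-- Lifts of two paths in `V₀` with the same endpoints end at the same point. -/
theorem paths_lift_same_end (hp : IsCoveringMap p) (hx₀ : p xt₀ ∈ V₀)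
    (himage : (fundamentalGroupMap (⟨Subtype.val, continuous_subtype_val⟩ : C(↥V₀, X))
        ⟨p xt₀, hx₀⟩).range =
      (fundamentalGroupMap ⟨p, hp.continuous⟩ xt₀).range)
    {w : ↥V₀} (sp tp : Path (⟨p xt₀, hx₀⟩ : ↥V₀) w)
    {Γσ Γτ : I → Xt} (cσ : Continuous Γσ) (cτ : Continuous Γτ)
    (hσp : ∀ t, p (Γσ t) = (sp.map continuous_subtype_val) t)
    (hτp : ∀ t, p (Γτ t) = (tp.map continuous_subtype_val) t)
    (hσ0 : Γσ 0 = xt₀) (hτ0 : Γτ 0 = xt₀) : Γσ 1 = Γτ 1 := by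
  have hΓσ1 : p (Γσ 1) = (w : X) := by
    rw [hσp 1]; exact (sp.map continuous_subtype_val).target
  obtain ⟨Θ, hΘp, hΘ0⟩ := hp.exists_path_lift
    ((tp.map continuous_subtype_val).symm).toContinuousMap (Γσ 1)
    (by rw [hΓσ1]; exact ((tp.map continuous_subtype_val).symm).source.symm)
  have hΛp : ∀ t, p ((Path.trans (⟨⟨Γσ, cσ⟩, hσ0, rfl⟩ : Path xt₀ (Γσ 1))
      (⟨Θ, hΘ0, rfl⟩ : Path (Γσ 1) (Θ 1))) t) =
      ((sp.trans tp.symm).map continuous_subtype_val) t := by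
    intro t
    show _ = Subtype.val ((sp.trans tp.symm) t)
    rw [Path.trans_apply, Path.trans_apply]
    split_ifs with h
    · exact hσp _
    · exact hΘp _
  have hΛ1 : (Path.trans (⟨⟨Γσ, cσ⟩, hσ0, rfl⟩ : Path xt₀ (Γσ 1))
      (⟨Θ, hΘ0, rfl⟩ : Path (Γσ 1) (Θ 1))) 1 = xt₀ :=
    loops_lift_closed hp hx₀ himage (sp.trans tp.symm) (Path.trans _ _).continuous hΛp
      (Path.source _)
  have hΘ1 : Θ 1 = xt₀ := by
    rw [← (Path.trans (⟨⟨Γσ, cσ⟩, hσ0, rfl⟩ : Path xt₀ (Γσ 1))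
      (⟨Θ, hΘ0, rfl⟩ : Path (Γσ 1) (Θ 1))).target, hΛ1]
  have hrev : ∀ t, Γτ t = Θ (unitInterval.symm t) := by
    apply hp.lift_unique cτ (Θ.continuous.comp unitInterval.continuous_symm)
    · intro t
      rw [hτp t]
      show (tp.map continuous_subtype_val) t = p (Θ (unitInterval.symm t))
      rw [hΘp (unitInterval.symm t)]
      show (tp.map continuous_subtype_val) t =
        (tp.map continuous_subtype_val) (unitInterval.symm (unitInterval.symm t))
      rw [unitInterval.symm_symm]
    · show Γτ 0 = Θ (unitInterval.symm 0)
      rw [hτ0, unitInterval.symm_zero, hΘ1]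
  rw [hrev 1, unitInterval.symm_one, hΘ0]

end Key

/-- The preimage of a locally path connected subspace under a covering map is locally path
connected. -/
theorem IsCoveringMap.locPathConnectedSpace_preimage {E X : Type*} [TopologicalSpace E]
    [TopologicalSpace X] {p : E → X} (hp : IsCoveringMap p) (V : Set X)
    [LocallyPathConnectedSpace ↥V] : LocallyPathConnectedSpace ↥(p ⁻¹' V) := by
  constructor
  intro e
  rw [Filter.hasBasis_self]
  intro Z hZ
  -- reduce to an open set u' in E
  rw [nhds_induced, Filter.mem_comap] at hZ
  obtain ⟨u, hu_nhds, huZ⟩ := hZ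
  obtain ⟨u', hu'u, hu'open, heu'⟩ := mem_nhds_iff.1 hu_nhds
  haveI : DiscreteTopology ↥(p ⁻¹' {p (e : E)}) := (hp (p (e : E))).1
  haveI : Nonempty ↥(p ⁻¹' {p (e : E)}) := ⟨⟨e, rfl⟩⟩
  set T := (hp (p (e : E))).toTrivialization with hTdef
  have hebase : p (e : E) ∈ T.baseSet := (hp (p (e : E))).mem_toTrivialization_baseSet
  have hesrc : (e : E) ∈ T.source := T.mem_source.2 hebase
  set cc := (T (e : E)).2 with hccdef
  have hsheet_open : IsOpen (T.source ∩ (Prod.snd ∘ T) ⁻¹' {cc}) :=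
    T.continuousOn_toFun.isOpen_inter_preimage T.open_source
      (continuous_snd.isOpen_preimage _ (isOpen_discrete _))
  set O : Set E := u' ∩ (T.source ∩ (Prod.snd ∘ T) ⁻¹' {cc}) with hOdef
  have hO_open : IsOpen O := hu'open.inter hsheet_open
  have heO : (e : E) ∈ O := ⟨heu', hesrc, rfl⟩
  have hOsheet : ∀ x ∈ O, x = T.toOpenPartialHomeomorph.symm (p x, cc) := by
    intro x hx
    have h1 : T x = (p x, cc) := by
      have ha : (T x).1 = p x := T.coe_fst hx.2.1
      have hb : (T x).2 = cc := hx.2.2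
      rw [← ha, ← hb]
    rw [← h1]
    exact (T.toOpenPartialHomeomorph.left_inv hx.2.1).symm
  have hO_base : ∀ x ∈ O, p x ∈ T.baseSet := fun x hx => T.mem_source.1 hx.2.1
  have hpO_open : IsOpen (p '' O) := hp.isOpenMap O hO_open
  set ev : ↥V := ⟨p (e : E), e.2⟩ with hevdef
  have hZV : ((↑) : ↥V → X) ⁻¹' (p '' O) ∈ 𝓝 ev :=
    continuous_subtype_val.continuousAt.preimage_mem_nhds
      (hpO_open.mem_nhds ⟨(e : E), heO, rfl⟩)
  obtain ⟨W, ⟨hWn, hWpc⟩, hWsub⟩ := (path_connected_basis ev).mem_iff.1 hZV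
  -- an open set in X witnessing that W is a neighborhood
  have hWn' := hWn
  rw [nhds_induced, Filter.mem_comap] at hWn'
  obtain ⟨uW0, huW0_nhds, huW0W⟩ := hWn'
  obtain ⟨uW, huWsub, huWopen, heuW⟩ := mem_nhds_iff.1 huW0_nhds
  -- the sheet over W
  set R' : Set E := T.toOpenPartialHomeomorph.symm '' ((((↑) : ↥V → X) '' W) ×ˢ {cc}) with hR'def
  have hWpO : ∀ w ∈ W, ((w : ↥V) : X) ∈ p '' O := fun w hw => hWsub hw
  have hWbase : ∀ w ∈ W, ((w : ↥V) : X) ∈ T.baseSet := by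
    intro w hw
    obtain ⟨o, hoO, hpo⟩ := hWpO w hw
    rw [← hpo]
    exact hO_base o hoO
  have hR'O : R' ⊆ O := by
    rintro _ ⟨⟨x, f⟩, ⟨⟨w, hwW, rfl⟩, hf⟩, rfl⟩
    obtain ⟨o, hoO, hpo⟩ := hWpO w hwW
    have hfc : f = cc := hf
    rw [hfc, ← hpo, ← hOsheet o hoO]
    exact hoO
  have hR'pc : IsPathConnected R' := by
    have h1 : IsPathConnected (((↑) : ↥V → X) '' W) := hWpc.image continuous_subtype_val
    have h2 : IsPathConnected ((((↑) : ↥V → X) '' W) ×ˢ ({cc} : Set _)) := by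
      rw [Set.prod_singleton]
      exact h1.image (Continuous.prodMk continuous_id continuous_const)
    refine h2.image' ?_
    apply T.toOpenPartialHomeomorph.continuousOn_symm.mono
    rintro ⟨x, f⟩ ⟨⟨w, hwW, rfl⟩, hf⟩
    exact T.mem_target.2 (hWbase w hwW)
  have hR'V : R' ⊆ p ⁻¹' V := by
    rintro _ ⟨⟨x, f⟩, ⟨⟨w, hwW, rfl⟩, hf⟩, rfl⟩
    have hfc : f = cc := hf
    have : p (T.toOpenPartialHomeomorph.symm ((w : X), f)) = (w : X) := by
      rw [hfc]
      exact T.proj_symm_apply (T.mem_target.2 (hWbase w hwW))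
    show p _ ∈ V
    rw [this]
    exact w.2
  set R : Set ↥(p ⁻¹' V) := ((↑) : ↥(p ⁻¹' V) → E) ⁻¹' R' with hRdef
  refine ⟨R, ?_, ?_, ?_⟩
  · -- R is a neighborhood of e
    have hO₂ : IsOpen (O ∩ p ⁻¹' uW) := hO_open.inter (huWopen.preimage hp.continuous)
    have heO₂ : (e : E) ∈ O ∩ p ⁻¹' uW := ⟨heO, heuW⟩
    have hsub : ((↑) : ↥(p ⁻¹' V) → E) ⁻¹' (O ∩ p ⁻¹' uW) ⊆ R := by
      rintro e' ⟨he'O, he'uW⟩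
      have hw : (⟨p (e' : E), e'.2⟩ : ↥V) ∈ W := huW0W (huWsub he'uW)
      refine ⟨(p (e' : E), cc), ⟨⟨⟨p (e' : E), e'.2⟩, hw, rfl⟩, rfl⟩, ?_⟩
      exact (hOsheet _ he'O).symm
    exact Filter.mem_of_superset
      ((hO₂.preimage continuous_subtype_val).mem_nhds heO₂) hsub
  · -- R is path connected
    rw [Topology.IsInducing.subtypeVal.isPathConnected_iff]
    have : ((↑) : ↥(p ⁻¹' V) → E) '' R = R' := by
      rw [hRdef, Subtype.image_preimage_coe, Set.inter_eq_right.2 hR'V]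
    rw [this]
    exact hR'pc
  · -- R ⊆ Z
    intro e' he'
    exact huZ (hu'u (hR'O he').1)

/-- Let `p : X̃ → X` be a covering map of path-connected (locally path-connected) spaces
corresponding to the subgroup `H = p_*(π₁(X̃, x̃₀)) ≤ π₁(X, x₀)` (`x₀ = p x̃₀`), and let
`V₀ ⊆ X` be a path-connected subspace containing `x₀` whose inclusion induces an
isomorphism `π₁(V₀, x₀) ≅ H` (i.e. the inclusion-induced map on `π₁` is injective with
image `H`).  Then the inclusion `V₀ ↪ X` lifts to an embedding of `V₀` into `X̃`: there
is a lift of the inclusion mapping `V₀` homeomorphically onto a component of `p⁻¹(V₀)`. -/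
theorem stmt13 {Xt X : Type} [TopologicalSpace Xt] [TopologicalSpace X]
    [PathConnectedSpace Xt] [PathConnectedSpace X]
    [LocallyPathConnectedSpace Xt] [LocallyPathConnectedSpace X]
    (p : Xt → X) (hp : IsCoveringMap p) (xt₀ : Xt)
    (V₀ : Set X) (hV₀conn : IsPathConnected V₀) [LocallyPathConnectedSpace ↥V₀]
    (hx₀ : p xt₀ ∈ V₀)
    (hinj : Function.Injective
      (fundamentalGroupMap (⟨Subtype.val, continuous_subtype_val⟩ : C(↥V₀, X))
        ⟨p xt₀, hx₀⟩))
    (himage : (fundamentalGroupMap (⟨Subtype.val, continuous_subtype_val⟩ : C(↥V₀, X))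
        ⟨p xt₀, hx₀⟩).range =
      (fundamentalGroupMap ⟨p, hp.continuous⟩ xt₀).range) :
    ∃ g : C(↥V₀, Xt), (∀ v : ↥V₀, p (g v) = (v : X)) ∧ g ⟨p xt₀, hx₀⟩ = xt₀ ∧
      Topology.IsEmbedding g ∧ Set.range g = connectedComponentIn (p ⁻¹' V₀) xt₀ := by
  haveI hpcs : PathConnectedSpace ↥V₀ := isPathConnected_iff_pathConnectedSpace.1 hV₀conn
  have hlift : ∀ v : ↥V₀, ∃ Γ : C(I, Xt),
      (∀ t, p (Γ t) = ((PathConnectedSpace.somePath (⟨p xt₀, hx₀⟩ : ↥V₀) v).map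
        continuous_subtype_val) t) ∧ Γ 0 = xt₀ :=
    fun v => hp.exists_path_lift _ xt₀
      ((Path.source ((PathConnectedSpace.somePath (⟨p xt₀, hx₀⟩ : ↥V₀) v).map
        continuous_subtype_val)).symm)
  set g : ↥V₀ → Xt := fun v => (hlift v).choose 1 with hgdef
  have hgp : ∀ v t, p ((hlift v).choose t) =
      ((PathConnectedSpace.somePath (⟨p xt₀, hx₀⟩ : ↥V₀) v).map continuous_subtype_val) t :=
    fun v => (hlift v).choose_spec.1
  have hg0' : ∀ v, (hlift v).choose 0 = xt₀ := fun v => (hlift v).choose_spec.2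
  have hgproj : ∀ v, p (g v) = (v : X) := by
    intro v
    show p ((hlift v).choose 1) = (v : X)
    rw [hgp v 1]
    exact Path.target _
  have hend : ∀ (w : ↥V₀) (β : Path (⟨p xt₀, hx₀⟩ : ↥V₀) w) (Γ : I → Xt), Continuous Γ →
      (∀ t, p (Γ t) = (β.map continuous_subtype_val) t) → Γ 0 = xt₀ → Γ 1 = g w := by
    intro w β Γ hc hl h0
    exact paths_lift_same_end hp hx₀ himage β (PathConnectedSpace.somePath _ w) hc
      (hlift w).choose.continuous hl (hgp w) h0 (hg0' w)
  have hgbase : g ⟨p xt₀, hx₀⟩ = xt₀ := by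
    have := hend ⟨p xt₀, hx₀⟩ (Path.refl _) (fun _ => xt₀) continuous_const (fun t => rfl) rfl
    exact this.symm
  -- continuity of g
  have hgc : Continuous g := by
    rw [continuous_iff_continuousAt]
    intro v
    haveI : Nonempty ↥(p ⁻¹' {(v : X)}) := ⟨⟨g v, hgproj v⟩⟩
    set T := (hp (v : X)).toTrivialization with hTdef
    have hvU : (v : X) ∈ T.baseSet := (hp (v : X)).mem_toTrivialization_baseSet
    have hZ : (Subtype.val ⁻¹' T.baseSet : Set ↥V₀) ∈ 𝓝 v :=
      continuous_subtype_val.continuousAt.preimage_mem_nhds (T.open_baseSet.mem_nhds hvU)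
    obtain ⟨W, ⟨hWnhds, hWpc⟩, hWZ⟩ := (path_connected_basis v).mem_iff.1 hZ
    have hvW : v ∈ W := mem_of_mem_nhds hWnhds
    set cc := (T (g v)).2 with hccdef
    have hgsrc : g v ∈ T.source := T.mem_source.2 (by rw [hgproj v]; exact hvU)
    have hsymm_gv : T.toOpenPartialHomeomorph.symm ((v : X), cc) = g v := by
      have h := T.symm_apply_mk_proj hgsrc
      rwa [hgproj v] at h
    have hkey : ∀ w ∈ W, g w = T.toOpenPartialHomeomorph.symm ((w : X), cc) := by
      intro w hw
      have hj : JoinedIn W v w := hWpc.joinedIn v hvW w hw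
      have hβbase : ∀ t, ((hj.somePath t : ↥V₀) : X) ∈ T.baseSet :=
        fun t => hWZ (hj.somePath_mem t)
      set Θf : I → Xt := fun t => T.toOpenPartialHomeomorph.symm ((hj.somePath t : X), cc)
        with hΘdef
      have hΘc : Continuous Θf := T.toOpenPartialHomeomorph.continuousOn_symm.comp_continuous
        ((continuous_subtype_val.comp hj.somePath.continuous).prodMk continuous_const)
        (fun t => T.mem_target.2 (hβbase t))
      have hΘp : ∀ t, p (Θf t) = (hj.somePath t : X) :=
        fun t => T.proj_symm_apply (T.mem_target.2 (hβbase t))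
      have hΘ0 : Θf 0 = g v := by
        show T.toOpenPartialHomeomorph.symm ((hj.somePath 0 : X), cc) = g v
        rw [hj.somePath.source]
        exact hsymm_gv
      set Pα : Path xt₀ (g v) := ⟨(hlift v).choose, hg0' v, rfl⟩ with hPαdef
      set PΘ : Path (g v) (Θf 1) := ⟨⟨Θf, hΘc⟩, hΘ0, rfl⟩ with hPΘdef
      have hcomb : ∀ t, p ((Pα.trans PΘ) t) =
          (((PathConnectedSpace.somePath (⟨p xt₀, hx₀⟩ : ↥V₀) v).trans hj.somePath).map continuous_subtype_val) t := by
        intro t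
        show _ = Subtype.val (((PathConnectedSpace.somePath (⟨p xt₀, hx₀⟩ : ↥V₀) v).trans hj.somePath) t)
        rw [Path.trans_apply, Path.trans_apply]
        split_ifs with h
        · exact hgp v _
        · exact hΘp _
      have hfin := hend w ((PathConnectedSpace.somePath (⟨p xt₀, hx₀⟩ : ↥V₀) v).trans hj.somePath) _
        (Pα.trans PΘ).continuous hcomb (Pα.trans PΘ).source
      rw [← hfin, (Pα.trans PΘ).target]
      show T.toOpenPartialHomeomorph.symm ((hj.somePath 1 : X), cc) = _
      rw [hj.somePath.target]
    have hc2 : ContinuousAt (fun w : ↥V₀ => T.toOpenPartialHomeomorph.symm ((w : X), cc)) v := by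
      apply ContinuousAt.comp
      · exact T.toOpenPartialHomeomorph.continuousOn_symm.continuousAt
          (T.open_target.mem_nhds (T.mem_target.2 hvU))
      · exact continuous_subtype_val.continuousAt.prodMk continuousAt_const
    apply ContinuousAt.congr hc2
    filter_upwards [hWnhds] with w hw
    exact (hkey w hw).symm
  refine ⟨⟨g, hgc⟩, hgproj, hgbase, ?_, ?_⟩
  · -- embedding
    apply Topology.IsEmbedding.of_comp hgc hp.continuous
    have hcomp : p ∘ g = (Subtype.val : ↥V₀ → X) := funext hgproj
    rw [hcomp]
    exact Topology.IsEmbedding.subtypeVal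
  · -- range equals the component
    haveI := hp.locPathConnectedSpace_preimage V₀
    have hxt₀mem : xt₀ ∈ p ⁻¹' V₀ := hx₀
    apply Set.Subset.antisymm
    · have hpc : IsPathConnected (Set.range g) := by
        rw [← Set.image_univ]
        exact (pathConnectedSpace_iff_univ.1 hpcs).image hgc
      refine hpc.isConnected.isPreconnected.subset_connectedComponentIn
        ⟨⟨p xt₀, hx₀⟩, hgbase⟩ ?_
      rintro _ ⟨v, rfl⟩
      show p (g v) ∈ V₀
      rw [hgproj v]
      exact v.2
    · intro y hy
      rw [connectedComponentIn_eq_image hxt₀mem] at hy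
      obtain ⟨y', hy', rfl⟩ := hy
      rw [← pathComponent_eq_connectedComponent] at hy'
      obtain ⟨δ⟩ : Joined (⟨xt₀, hxt₀mem⟩ : ↥(p ⁻¹' V₀)) y' := hy'
      set βV : Path (⟨p xt₀, hx₀⟩ : ↥V₀) ⟨p (y' : Xt), y'.2⟩ :=
        ⟨⟨fun t => ⟨p ((δ t : Xt)), (δ t).2⟩,
          Continuous.subtype_mk (hp.continuous.comp (continuous_subtype_val.comp δ.continuous)) _⟩,
          by apply Subtype.ext; show p ((δ 0 : Xt)) = p xt₀; rw [δ.source],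
          by apply Subtype.ext; show p ((δ 1 : Xt)) = p (y' : Xt); rw [δ.target]⟩ with hβVdef
      have h1 : ∀ t, g (βV t) = (δ t : Xt) := by
        apply hp.lift_unique (hgc.comp βV.continuous) (continuous_subtype_val.comp δ.continuous)
        · intro t
          show p (g (βV t)) = p ((δ t : Xt))
          rw [hgproj (βV t)]
          rfl
        · show g (βV 0) = (δ 0 : Xt)
          rw [βV.source, δ.source]
          exact hgbase
      refine ⟨βV 1, ?_⟩
      show g (βV 1) = (y' : Xt)
      rw [h1 1, δ.target]
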